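/- Let X be a finite alphabet. Then the embedding order ≤_em is a partial order on X*, every set of pairwise ≤_em-incomparable words in X* is finite, and consequently, for every subset U ⊆ X*, the set M(U) of all minimal words of U with respect to ≤_em is finite. -/

import Mathlib

/-- The set `M(U)` of minimal words of `U ⊆ X*` with respect to the embedding
(sublist) order. -/
def minimalWords {X : Type*} (U : Set (List X)) : Set (List X) :=
  {u ∈ U | ∀ v ∈ U, List.Sublist v u → v = u}

lemma sublistForall₂_eq_iff {X : Type*} {l₁ l₂ : List X} :
    List.SublistForall₂ (· = ·) l₁ l₂ ↔ List.Sublist l₁ l₂ := by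
  rw [List.sublistForall₂_iff]
  constructor
  · rintro ⟨l, h1, h2⟩
    obtain rfl : l₁ = l := by
      have := List.forall₂_eq_eq_eq (α := X) ▸ h1
      exact this
    exact h2
  · exact fun h => ⟨l₁, List.forall₂_refl _, h⟩

lemma pwo_sublist {X : Type*} [Finite X] :
    (Set.univ : Set (List X)).PartiallyWellOrderedOn (fun u v => List.Sublist u v) := by
  have h : (Set.univ : Set X).PartiallyWellOrderedOn (· = ·) :=
    Set.finite_univ.partiallyWellOrderedOn
  have := h.partiallyWellOrderedOn_sublistForall₂ (· = ·)
  have heq : { l : List X | ∀ x, x ∈ l → x ∈ Set.univ } = Set.univ := by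
    ext l; simp
  rw [heq] at this
  intro f
  obtain ⟨m, n, hmn, h'⟩ := this f
  exact ⟨m, n, hmn, (sublistForall₂_eq_iff (l₁ := (f m).1) (l₂ := (f n).1)).mp h'⟩

theorem stmt3 {X : Type*} [Finite X] :
    IsPartialOrder (List X) (fun u v => List.Sublist u v) ∧
    (∀ S : Set (List X),
      (∀ u ∈ S, ∀ v ∈ S, u ≠ v → ¬ List.Sublist u v ∧ ¬ List.Sublist v u) → S.Finite) ∧
    (∀ U : Set (List X), (minimalWords U).Finite) := by
  have antichain_finite : ∀ S : Set (List X),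
      (∀ u ∈ S, ∀ v ∈ S, u ≠ v → ¬ List.Sublist u v ∧ ¬ List.Sublist v u) → S.Finite := by
    intro S hS
    have ha : IsAntichain (fun u v => List.Sublist u v) S :=
      fun u hu v hv huv h => (hS u hu v hv huv).1 h
    exact ha.finite_of_partiallyWellOrderedOn
      (pwo_sublist.mono (Set.subset_univ S))
  have hpo : IsPartialOrder (List X) (fun u v => List.Sublist u v) := by
    exact { refl := List.Sublist.refl,
            trans := fun _ _ _ => List.Sublist.trans,
            antisymm := fun _ _ => List.Sublist.antisymm }
  refine ⟨hpo, antichain_finite, ?_⟩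
  intro U
  apply antichain_finite
  rintro u ⟨hu, hmu⟩ v ⟨hv, hmv⟩ huv
  exact ⟨fun h => huv (hmv u hu h), fun h => huv.symm (hmu v hv h)⟩
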